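/- Let (W, (·,·)) be nondegenerate and ω ∈ W with (ω,ω) > 0; set φ := exp(iω) = (1, iω, −(ω,ω)/2) ∈ Ṽ ⊗ ℂ, so that ⟨φ,φ⟩ = 0 and ⟨φ,φ̄⟩ = 2·(ω,ω) > 0. For α ∈ W set τ_α := (0, iα, −(α,ω)) ∈ Ṽ ⊗ ℂ. Then: (a) ⟨τ_α, φ⟩ = 0 for every α ∈ W; (b) ⟨τ_α, τ̄_β⟩ = (α,β) is real, so Im⟨τ_α, τ̄_β⟩ = 0 for all α, β ∈ W; (c) with T_φ := {x ∈ Ṽ⊗ℂ : ⟨x,φ⟩ = 0 = ⟨x,φ̄⟩} and π : Ṽ⊗ℂ → T_φ the projection along ℂφ ⊕ ℂφ̄, the ℝ-linear map α ↦ π(τ_α) is injective and its image is isotropic for the form Ω(x,y) := Im⟨x,ȳ⟩ on T_φ and has real dimension dim W = (1/2)·dim_ℝ T_φ, i.e. it is a Lagrangian subspace of (T_φ, Ω). (This is the statement that the symplectic structures form a Lagrangian in the moduli space of generalized Calabi–Yau structures.) -/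

import Mathlib

/-!
Statement 15: Let (W,(·,·)) be a nondegenerate symmetric bilinear real vector space, with
Mukai extension Ṽ := ℝ ⊕ W ⊕ ℝ, ⟨(a,w,b),(a',w',b')⟩ := (w,w') − a·b' − a'·b, extended
ℂ-bilinearly to the complexifications. Let ω ∈ W with (ω,ω) > 0 and
φ := exp(iω) = (1, iω, −(ω,ω)/2), so that ⟨φ,φ⟩ = 0 and ⟨φ,φ̄⟩ = 2·(ω,ω) > 0. For α ∈ W set
τ_α := (0, iα, −(α,ω)). Then: (a) ⟨τ_α,φ⟩ = 0; (b) ⟨τ_α,τ̄_β⟩ = (α,β) is real; (c) with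
T_φ := {x : ⟨x,φ⟩ = 0 = ⟨x,φ̄⟩} and π the projection onto T_φ along ℂφ ⊕ ℂφ̄, the map
α ↦ π(τ_α) is injective, its image is isotropic for Ω(x,y) := Im⟨x,ȳ⟩ and has real
dimension dim W = (1/2)·dim_ℝ T_φ: it is a Lagrangian subspace of (T_φ, Ω).
-/

open scoped TensorProduct ComplexOrder

set_option synthInstance.maxHeartbeats 1000000
set_option maxHeartbeats 1000000

noncomputable section

variable (W : Type) [AddCommGroup W] [Module ℝ W]

/-- The complexification `W_ℂ = ℂ ⊗ W`. -/
abbrev WC := ℂ ⊗[ℝ] W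

/-- Complex conjugation on `ℂ`, as an ℝ-linear map. -/
def conjR : ℂ →ₗ[ℝ] ℂ := Complex.conjAe.toLinearMap

/-- Complex conjugation on `W_ℂ`, fixing the real points `W`. -/
def cW : WC W →ₗ[ℝ] WC W := LinearMap.rTensor W conjR

/-- The canonical embedding `W → W_ℂ`. -/
def iW : W →ₗ[ℝ] WC W := TensorProduct.mk ℝ ℂ W 1

/-- The ℂ-bilinear extension of the form `q` to `W_ℂ`. -/
def qC (q : LinearMap.BilinForm ℝ W) : LinearMap.BilinForm ℂ (WC W) :=
  LinearMap.BilinForm.baseChange ℂ q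

/-- The complexified Mukai extension `Ṽ ⊗ ℂ = ℂ ⊕ W_ℂ ⊕ ℂ`. -/
abbrev VT := ℂ × WC W × ℂ

/-- The ℂ-bilinear Mukai pairing `⟨(a,w,b),(a',w',b')⟩ = (w,w') − a·b' − a'·b` on `Ṽ ⊗ ℂ`. -/
def Mc (q : LinearMap.BilinForm ℝ W) : VT W →ₗ[ℂ] VT W →ₗ[ℂ] ℂ :=
  LinearMap.mk₂ ℂ (fun x y => qC W q x.2.1 y.2.1 - x.1 * y.2.2 - y.1 * x.2.2)
    (fun x x' y => by simp [map_add]; ring)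
    (fun c x y => by simp [map_smul, smul_eq_mul]; ring)
    (fun x y y' => by simp [map_add]; ring)
    (fun c x y => by simp [map_smul, smul_eq_mul]; ring)

/-- Conjugation on `Ṽ ⊗ ℂ`, fixing the real points `Ṽ`. -/
def cT (x : VT W) : VT W := ((starRingEnd ℂ) x.1, cW W x.2.1, (starRingEnd ℂ) x.2.2)

/-- `exp(iω) := (1, iω, −(ω,ω)/2) ∈ Ṽ ⊗ ℂ`. -/
def expI (q : LinearMap.BilinForm ℝ W) (ω : W) : VT W :=
  ((1 : ℂ), Complex.I • iW W ω, ((-(q ω ω) / 2 : ℝ) : ℂ))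

/-- `τ_α := (0, iα, −(α,ω)) ∈ Ṽ ⊗ ℂ`. -/
def tau (q : LinearMap.BilinForm ℝ W) (ω α : W) : VT W :=
  ((0 : ℂ), Complex.I • iW W α, ((-(q α ω) : ℝ) : ℂ))

/-- `T_φ := {x : ⟨x,φ⟩ = 0 = ⟨x,φ̄⟩}`. -/
def Tspace (q : LinearMap.BilinForm ℝ W) (φ : VT W) : Submodule ℂ (VT W) :=
  LinearMap.ker ((Mc W q).flip φ) ⊓ LinearMap.ker ((Mc W q).flip (cT W φ))

section Aux

variable (q : LinearMap.BilinForm ℝ W)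

lemma iW_smul (c : ℂ) (u : W) : c • iW W u = c ⊗ₜ[ℝ] u := by
  simp [iW, TensorProduct.smul_tmul', smul_eq_mul]

lemma cW_tmul (c : ℂ) (u : W) :
    cW W (c ⊗ₜ[ℝ] u) = ((starRingEnd ℂ) c) ⊗ₜ[ℝ] u := by
  simp [cW, conjR]

lemma qC_tmul (c d : ℂ) (u v : W) :
    qC W q (c ⊗ₜ[ℝ] u) (d ⊗ₜ[ℝ] v) = ((q u v : ℝ) : ℂ) * (c * d) := by
  simp [qC, Complex.real_smul]

lemma expI_eq (ω : W) :
    expI W q ω = ((1 : ℂ), Complex.I ⊗ₜ[ℝ] ω, ((-(q ω ω) / 2 : ℝ) : ℂ)) := by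
  simp [expI, iW_smul]

lemma cT_expI (ω : W) :
    cT W (expI W q ω) = ((1 : ℂ), (-Complex.I) ⊗ₜ[ℝ] ω, ((-(q ω ω) / 2 : ℝ) : ℂ)) := by
  simp [cT, expI_eq, cW_tmul, Complex.conj_ofReal, Complex.conj_I, map_ofNat]
  all_goals norm_num

lemma tau_eq (ω α : W) :
    tau W q ω α = ((0 : ℂ), Complex.I ⊗ₜ[ℝ] α, ((-(q α ω) : ℝ) : ℂ)) := by
  simp [tau, iW_smul]

lemma cT_tau (ω β : W) :
    cT W (tau W q ω β) = ((0 : ℂ), (-Complex.I) ⊗ₜ[ℝ] β, ((-(q β ω) : ℝ) : ℂ)) := by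
  simp [cT, tau_eq, cW_tmul, Complex.conj_ofReal, Complex.conj_I]

lemma Mc_apply (x y : VT W) :
    Mc W q x y = qC W q x.2.1 y.2.1 - x.1 * y.2.2 - y.1 * x.2.2 := rfl

lemma mc_phi_phi (ω : W) : Mc W q (expI W q ω) (expI W q ω) = 0 := by
  rw [Mc_apply, expI_eq]
  simp [qC_tmul, Complex.I_mul_I]
  all_goals (push_cast; ring)

lemma mc_phi_cphi (ω : W) :
    Mc W q (expI W q ω) (cT W (expI W q ω)) = 2 * (q ω ω : ℂ) := by
  rw [Mc_apply, cT_expI, expI_eq]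
  simp [qC_tmul, Complex.I_mul_I]
  all_goals (push_cast; ring)

lemma mc_cphi_phi (ω : W) :
    Mc W q (cT W (expI W q ω)) (expI W q ω) = 2 * (q ω ω : ℂ) := by
  rw [Mc_apply, cT_expI, expI_eq]
  simp [qC_tmul, Complex.I_mul_I]
  all_goals (push_cast; ring)

lemma mc_cphi_cphi (ω : W) :
    Mc W q (cT W (expI W q ω)) (cT W (expI W q ω)) = 0 := by
  rw [Mc_apply, cT_expI]
  simp [qC_tmul, Complex.I_mul_I]
  all_goals (push_cast; ring)

lemma mc_tau_phi (ω α : W) : Mc W q (tau W q ω α) (expI W q ω) = 0 := by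
  rw [Mc_apply, expI_eq, tau_eq]
  simp [qC_tmul, Complex.I_mul_I]
  all_goals (push_cast; ring)

lemma mc_tau_cphi (ω α : W) :
    Mc W q (tau W q ω α) (cT W (expI W q ω)) = 2 * (q α ω : ℂ) := by
  rw [Mc_apply, cT_expI, tau_eq]
  simp [qC_tmul, Complex.I_mul_I]
  all_goals (push_cast; ring)

lemma mc_phi_ctau (hsymm : ∀ u v : W, q u v = q v u) (ω β : W) :
    Mc W q (expI W q ω) (cT W (tau W q ω β)) = 2 * (q β ω : ℂ) := by
  rw [Mc_apply, expI_eq, cT_tau]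
  simp [qC_tmul, Complex.I_mul_I, hsymm ω β]
  all_goals (push_cast; ring)

lemma mc_tau_ctau (ω α β : W) :
    Mc W q (tau W q ω α) (cT W (tau W q ω β)) = (q α β : ℂ) := by
  rw [Mc_apply, tau_eq, cT_tau]
  simp [qC_tmul, Complex.I_mul_I]

lemma mem_Tspace (ω : W) (x : VT W) :
    x ∈ Tspace W q (expI W q ω) ↔
      Mc W q x (expI W q ω) = 0 ∧ Mc W q x (cT W (expI W q ω)) = 0 := by
  simp [Tspace, Submodule.mem_inf, LinearMap.mem_ker]

lemma cT_sub_real_smul (r : ℝ) (x y : VT W) :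
    cT W (x - (r : ℂ) • y) = cT W x - (r : ℂ) • cT W y := by
  refine Prod.ext ?_ (Prod.ext ?_ ?_)
  · show (starRingEnd ℂ) (x.1 - (r : ℂ) * y.1) = (starRingEnd ℂ) x.1 - (r : ℂ) * (starRingEnd ℂ) y.1
    rw [map_sub, map_mul, Complex.conj_ofReal]
  · show cW W (x.2.1 - (r : ℂ) • y.2.1) = cW W x.2.1 - (r : ℂ) • cW W y.2.1
    rw [← Complex.coe_algebraMap, algebraMap_smul, algebraMap_smul, map_sub, map_smul]
  · show (starRingEnd ℂ) (x.2.2 - (r : ℂ) * y.2.2) = (starRingEnd ℂ) x.2.2 - (r : ℂ) * (starRingEnd ℂ) y.2.2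
    rw [map_sub, map_mul, Complex.conj_ofReal]

lemma pi_tau (hsymm : ∀ u v : W, q u v = q v u) (ω : W) (hω : q ω ω ≠ 0)
    (π : VT W →ₗ[ℂ] VT W)
    (hπT : ∀ x ∈ Tspace W q (expI W q ω), π x = x)
    (hπφ : π (expI W q ω) = 0) (α : W) :
    π (tau W q ω α) = tau W q ω α - ((q α ω / q ω ω : ℝ) : ℂ) • expI W q ω := by
  set c : ℂ := ((q α ω / q ω ω : ℝ) : ℂ) with hc
  have ht : tau W q ω α - c • expI W q ω ∈ Tspace W q (expI W q ω) := by
    rw [mem_Tspace]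
    constructor
    · rw [map_sub, map_smul, LinearMap.sub_apply, LinearMap.smul_apply,
        mc_tau_phi, mc_phi_phi]
      simp
    · rw [map_sub, map_smul, LinearMap.sub_apply, LinearMap.smul_apply,
        mc_tau_cphi, mc_phi_cphi, smul_eq_mul, hc]
      push_cast
      field_simp
      ring
  have hdecomp : tau W q ω α = (tau W q ω α - c • expI W q ω) + c • expI W q ω := by
    abel
  rw [hdecomp, map_add, map_smul, hπT _ ht, hπφ, smul_zero, add_zero]
  abel

/-- A retraction of `W_ℂ` onto `W` picking out the imaginary part. -/
def rW : WC W →ₗ[ℝ] W :=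
  (TensorProduct.lid ℝ W).toLinearMap ∘ₗ LinearMap.rTensor W Complex.imLm

lemma rW_I_tmul (u : W) : rW W (Complex.I ⊗ₜ[ℝ] u) = u := by
  simp [rW]

/-- `α ↦ τ_α` as an ℝ-linear map. -/
def tauL (q : LinearMap.BilinForm ℝ W) (ω : W) : W →ₗ[ℝ] VT W where
  toFun α := tau W q ω α
  map_add' a b := by
    simp only [tau, Prod.ext_iff, Prod.fst_add, Prod.snd_add, map_add, smul_add]
    refine ⟨by simp, by simp, ?_⟩
    simp only [LinearMap.add_apply]
    push_cast
    ring
  map_smul' r a := by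
    simp only [tau, Prod.ext_iff, RingHom.id_apply, Prod.smul_fst, Prod.smul_snd, map_smul]
    refine ⟨by simp, smul_comm _ _ _, ?_⟩
    simp only [LinearMap.smul_apply, smul_eq_mul, Complex.real_smul]
    push_cast
    ring

end Aux

/-- The symplectic structures form a Lagrangian: with `φ = exp(iω)`,
one has `⟨φ,φ⟩ = 0`, `⟨φ,φ̄⟩ = 2(ω,ω) > 0`; (a) `⟨τ_α,φ⟩ = 0`; (b) `⟨τ_α,τ̄_β⟩ = (α,β)` is
real; (c) for the projection `π` onto `T_φ` along `ℂφ ⊕ ℂφ̄`, the map `α ↦ π(τ_α)` is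
injective, its image is `Ω`-isotropic of real dimension `dim W = (1/2)·dim_ℝ T_φ`, i.e. a
Lagrangian subspace of `(T_φ, Ω)`. -/
theorem symplectic_structures_form_lagrangian
    (W : Type) [AddCommGroup W] [Module ℝ W] [FiniteDimensional ℝ W]
    (q : LinearMap.BilinForm ℝ W) (hsymm : ∀ u v : W, q u v = q v u)
    (hnd : LinearMap.BilinForm.Nondegenerate q)
    (ω : W) (hω : 0 < q ω ω)
    (π : VT W →ₗ[ℂ] VT W)
    (hπT : ∀ x ∈ Tspace W q (expI W q ω), π x = x)
    (hπφ : π (expI W q ω) = 0)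
    (hπφbar : π (cT W (expI W q ω)) = 0)
    (hπrange : ∀ x : VT W, π x ∈ Tspace W q (expI W q ω)) :
    (Mc W q (expI W q ω) (expI W q ω) = 0 ∧
      Mc W q (expI W q ω) (cT W (expI W q ω)) = 2 * (q ω ω : ℂ)) ∧
    (∀ α : W, Mc W q (tau W q ω α) (expI W q ω) = 0) ∧
    (∀ α β : W, Mc W q (tau W q ω α) (cT W (tau W q ω β)) = (q α β : ℂ) ∧
      (Mc W q (tau W q ω α) (cT W (tau W q ω β))).im = 0) ∧
    (Function.Injective (fun α : W => π (tau W q ω α)) ∧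
      (∀ α β : W, (Mc W q (π (tau W q ω α)) (cT W (π (tau W q ω β)))).im = 0) ∧
      Module.finrank ℝ
        (Submodule.span ℝ (Set.range (fun α : W => π (tau W q ω α)))) =
          Module.finrank ℝ W ∧
      2 * Module.finrank ℝ W =
        Module.finrank ℝ (Submodule.restrictScalars ℝ (Tspace W q (expI W q ω)))) := by
  have hω0 : q ω ω ≠ 0 := ne_of_gt hω
  have hω0c : (q ω ω : ℂ) ≠ 0 := by exact_mod_cast hω0
  -- the ℝ-linear map α ↦ π (τ_α)
  set Lmap : W →ₗ[ℝ] VT W := (π.restrictScalars ℝ).comp (tauL W q ω) with hL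
  have hLapp : ∀ α : W, Lmap α = π (tau W q ω α) := fun α => rfl
  have hπτ : ∀ α : W, π (tau W q ω α)
      = tau W q ω α - ((q α ω / q ω ω : ℝ) : ℂ) • expI W q ω :=
    pi_tau W q hsymm ω hω0 π hπT hπφ
  -- injectivity
  have hinj : Function.Injective (fun α : W => π (tau W q ω α)) := by
    intro a b hab
    simp only [hπτ] at hab
    have h1 : ((q a ω / q ω ω : ℝ) : ℂ) = ((q b ω / q ω ω : ℝ) : ℂ) := by
      have := congrArg Prod.fst hab
      simpa [tau_eq, expI_eq, Prod.smul_fst, Prod.fst_sub] using this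
    rw [h1, sub_left_inj] at hab
    have h2 := congrArg (fun x : VT W => rW W x.2.1) hab
    simpa [tau_eq, rW_I_tmul] using h2
  have hinjL : Function.Injective Lmap := hinj
  -- isotropy of the image
  have hiso : ∀ α β : W,
      (Mc W q (π (tau W q ω α)) (cT W (π (tau W q ω β)))).im = 0 := by
    intro α β
    rw [hπτ α, hπτ β, cT_sub_real_smul]
    simp only [map_sub, map_smul, LinearMap.sub_apply, LinearMap.smul_apply]
    rw [mc_tau_ctau, mc_tau_cphi, mc_phi_ctau W q hsymm, mc_phi_cphi]
    simp only [smul_eq_mul]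
    push_cast
    rw [show ((q α β : ℂ) - (q α ω : ℂ) / (q ω ω : ℂ) * (2 * (q β ω : ℂ)) -
        (q β ω : ℂ) / (q ω ω : ℂ) * (2 * (q α ω : ℂ) - (q α ω : ℂ) / (q ω ω : ℂ) * (2 * (q ω ω : ℂ))))
        = ((q α β - q α ω / q ω ω * (2 * q β ω) -
            q β ω / q ω ω * (2 * q α ω - q α ω / q ω ω * (2 * q ω ω)) : ℝ) : ℂ) from by
        push_cast; ring, Complex.ofReal_im]
  -- dimension of the span
  have hspan : Submodule.span ℝ (Set.range (fun α : W => π (tau W q ω α)))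
      = LinearMap.range Lmap := by
    have : (fun α : W => π (tau W q ω α)) = ⇑Lmap := rfl
    rw [this, ← LinearMap.coe_range, Submodule.span_eq]
  have hdimspan : Module.finrank ℝ
      (Submodule.span ℝ (Set.range (fun α : W => π (tau W q ω α))))
      = Module.finrank ℝ W := by
    rw [hspan]
    exact LinearMap.finrank_range_of_inj hinjL
  -- dimension of T
  have hdimT : 2 * Module.finrank ℝ W
      = Module.finrank ℝ (Submodule.restrictScalars ℝ (Tspace W q (expI W q ω))) := by
    set φ := expI W q ω
    set f : VT W →ₗ[ℂ] ℂ × ℂ := LinearMap.prod ((Mc W q).flip φ) ((Mc W q).flip (cT W φ))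
    have hker : LinearMap.ker f = Tspace W q φ := by
      rw [LinearMap.ker_prod]; rfl
    have hsurj : Function.Surjective f := by
      intro p
      refine ⟨(p.1 / (2 * (q ω ω : ℂ))) • cT W φ + (p.2 / (2 * (q ω ω : ℂ))) • φ, ?_⟩
      have h1 : f ((p.1 / (2 * (q ω ω : ℂ))) • cT W φ + (p.2 / (2 * (q ω ω : ℂ))) • φ)
          = ((p.1 / (2 * (q ω ω : ℂ))) * Mc W q (cT W φ) φ
              + (p.2 / (2 * (q ω ω : ℂ))) * Mc W q φ φ,
            (p.1 / (2 * (q ω ω : ℂ))) * Mc W q (cT W φ) (cT W φ)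
              + (p.2 / (2 * (q ω ω : ℂ))) * Mc W q φ (cT W φ)) := by
        simp [f, LinearMap.prod_apply, map_add, map_smul, smul_eq_mul]
      rw [h1, mc_cphi_phi, mc_phi_phi, mc_cphi_cphi, mc_phi_cphi]
      refine Prod.ext ?_ ?_ <;> field_simp <;> ring
    have hrangef : LinearMap.range f = ⊤ := LinearMap.range_eq_top.2 hsurj
    have hrn := LinearMap.finrank_range_add_finrank_ker f
    rw [hrangef, hker] at hrn
    have hVT : Module.finrank ℂ (VT W) = Module.finrank ℝ W + 2 := by
      simp [Module.finrank_prod, Module.finrank_baseChange, Module.finrank_self]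
      ring
    have htop : Module.finrank ℂ (⊤ : Submodule ℂ (ℂ × ℂ)) = 2 := by
      rw [finrank_top]
      simp [Module.finrank_prod]
    rw [htop, hVT] at hrn
    have hTC : Module.finrank ℂ (Tspace W q φ) = Module.finrank ℝ W := by omega
    have he : (Submodule.restrictScalars ℝ (Tspace W q φ)) ≃ₗ[ℝ] (Tspace W q φ) :=
      (Submodule.restrictScalarsEquiv ℝ ℂ (VT W) (Tspace W q φ)).restrictScalars ℝ
    rw [he.finrank_eq]
    rw [← Module.finrank_mul_finrank ℝ ℂ (Tspace W q φ), hTC, Complex.finrank_real_complex]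
  refine ⟨⟨mc_phi_phi W q ω, mc_phi_cphi W q ω⟩, mc_tau_phi W q ω,
    fun α β => ⟨mc_tau_ctau W q ω α β, by rw [mc_tau_ctau]; exact Complex.ofReal_im _⟩,
    hinj, hiso, hdimspan, hdimT⟩

end
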